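/- Let n ≥ 2 and ρ > 0. Suppose that for each k = 0,…,n there exist a polynomial q_k of exact degree k and a real number λ_k such that U_n^ρ q_k = λ_k q_k, with q_n monic and 1 = λ₀ = λ₁ > λ₂ > … > λ_n > 0. Then for every f ∈ C[0,1], (1−λ_n)^{−M} (⊕^M U_n^ρ f − L_n^ρ f) converges uniformly on [0,1], as M → ∞, to −[F_{n,0}^ρ, F_{n,1}^ρ, …, F_{n,n}^ρ; f] · q_n. -/

import Mathlib

open MeasureTheory

/-- Euler Beta function `B(a,b) = ∫₀¹ t^(a-1) (1-t)^(b-1) dt`. -/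
noncomputable def betaFn (a b : ℝ) : ℝ :=
  ∫ t in (0:ℝ)..1, t ^ (a - 1) * (1 - t) ^ (b - 1)

/-- The functionals `F_{n,k}^ρ`. -/
noncomputable def Ffun (n k : ℕ) (ρ : ℝ) (f : ℝ → ℝ) : ℝ :=
  if k = 0 then f 0
  else if k = n then f 1
  else (betaFn ((k : ℝ) * ρ) (((n : ℝ) - (k : ℝ)) * ρ))⁻¹ *
    ∫ t in (0:ℝ)..1, t ^ ((k : ℝ) * ρ - 1) * (1 - t) ^ (((n : ℝ) - (k : ℝ)) * ρ - 1) * f t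

/-- Bernstein basis polynomial `p_{n,k}(x)`. -/
noncomputable def bern (n k : ℕ) (x : ℝ) : ℝ :=
  (n.choose k : ℝ) * x ^ k * (1 - x) ^ (n - k)

/-- The operator `U_n^ρ`. -/
noncomputable def Uop (n : ℕ) (ρ : ℝ) (f : ℝ → ℝ) (x : ℝ) : ℝ :=
  ∑ k ∈ Finset.range (n + 1), Ffun n k ρ f * bern n k x

/-- The iterated Boolean sum `⊕^M U_n^ρ = I − (I − U_n^ρ)^M`. -/
noncomputable def boolSum (n : ℕ) (ρ : ℝ) (M : ℕ) (f : ℝ → ℝ) : ℝ → ℝ :=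
  fun x => f x - ((fun (g : ℝ → ℝ) (y : ℝ) => g y - Uop n ρ g y)^[M] f) x

lemma wgt_intervalIntegrable {a b : ℝ} (ha : 0 < a) (hb : 0 < b) :
    IntervalIntegrable (fun t : ℝ => t ^ (a - 1) * (1 - t) ^ (b - 1)) volume 0 1 := by
  have h1 : IntervalIntegrable (fun t : ℝ => t ^ (a - 1) * (1 - t) ^ (b - 1)) volume 0 (1/2) := by
    apply (intervalIntegral.intervalIntegrable_rpow' (by linarith)).mul_continuousOn
    apply ContinuousOn.rpow_const (continuous_const.sub continuous_id).continuousOn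
    intro x hx
    rw [Set.uIcc_of_le (by norm_num)] at hx
    left
    have := hx.2
    intro h; simp only [Pi.sub_apply, id_eq] at h; nlinarith
  have h3 : IntervalIntegrable (fun t : ℝ => (1 - t) ^ (b - 1)) volume (1/2) 1 := by
    have := (intervalIntegral.intervalIntegrable_rpow' (r := b - 1) (by linarith)
      (a := 0) (b := 1/2)).comp_sub_left 1
    norm_num at this
    exact this.symm
  have h2 : IntervalIntegrable (fun t : ℝ => t ^ (a - 1) * (1 - t) ^ (b - 1)) volume (1/2) 1 := by
    apply h3.continuousOn_mul
    apply ContinuousOn.rpow_const continuous_id.continuousOn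
    intro x hx
    rw [Set.uIcc_of_le (by norm_num)] at hx
    left
    intro h; simp only [id_eq] at h; linarith [hx.1]
  exact h1.trans h2

lemma betaFn_pos {a b : ℝ} (ha : 0 < a) (hb : 0 < b) : 0 < betaFn a b := by
  apply intervalIntegral.intervalIntegral_pos_of_pos_on (wgt_intervalIntegrable ha hb)
  · intro x hx
    exact mul_pos (Real.rpow_pos_of_pos hx.1 _) (Real.rpow_pos_of_pos (by linarith [hx.2]) _)
  · norm_num

lemma kInt_of_continuousOn {n k : ℕ} {ρ : ℝ} (hρ : 0 < ρ) (hk1 : 1 ≤ k) (hkn : k < n)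
    {g : ℝ → ℝ} (hg : ContinuousOn g (Set.Icc 0 1)) :
    IntervalIntegrable
      (fun t : ℝ => t ^ ((k : ℝ) * ρ - 1) * (1 - t) ^ (((n : ℝ) - (k : ℝ)) * ρ - 1) * g t)
      volume 0 1 := by
  have ha : 0 < (k : ℝ) * ρ := mul_pos (by exact_mod_cast hk1) hρ
  have hb : 0 < ((n : ℝ) - (k : ℝ)) * ρ := by
    apply mul_pos _ hρ
    have : (k : ℝ) < n := by exact_mod_cast hkn
    linarith
  exact (wgt_intervalIntegrable ha hb).mul_continuousOn
    (by rwa [Set.uIcc_of_le (by norm_num : (0:ℝ) ≤ 1)])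

lemma Ffun_add (n k : ℕ) (ρ : ℝ) (g h : ℝ → ℝ)
    (hg : k ≠ 0 → k ≠ n → IntervalIntegrable
      (fun t : ℝ => t ^ ((k : ℝ) * ρ - 1) * (1 - t) ^ (((n : ℝ) - (k : ℝ)) * ρ - 1) * g t)
      volume 0 1)
    (hh : k ≠ 0 → k ≠ n → IntervalIntegrable
      (fun t : ℝ => t ^ ((k : ℝ) * ρ - 1) * (1 - t) ^ (((n : ℝ) - (k : ℝ)) * ρ - 1) * h t)
      volume 0 1) :
    Ffun n k ρ (fun t => g t + h t) = Ffun n k ρ g + Ffun n k ρ h := by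
  unfold Ffun
  split_ifs with h0 hn
  · rfl
  · rfl
  · simp only [mul_add]
    rw [intervalIntegral.integral_add (hg h0 hn) (hh h0 hn)]
    ring

lemma Ffun_sub (n k : ℕ) (ρ : ℝ) (g h : ℝ → ℝ)
    (hg : k ≠ 0 → k ≠ n → IntervalIntegrable
      (fun t : ℝ => t ^ ((k : ℝ) * ρ - 1) * (1 - t) ^ (((n : ℝ) - (k : ℝ)) * ρ - 1) * g t)
      volume 0 1)
    (hh : k ≠ 0 → k ≠ n → IntervalIntegrable
      (fun t : ℝ => t ^ ((k : ℝ) * ρ - 1) * (1 - t) ^ (((n : ℝ) - (k : ℝ)) * ρ - 1) * h t)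
      volume 0 1) :
    Ffun n k ρ (fun t => g t - h t) = Ffun n k ρ g - Ffun n k ρ h := by
  unfold Ffun
  split_ifs with h0 hn
  · rfl
  · rfl
  · simp only [mul_sub]
    rw [intervalIntegral.integral_sub (hg h0 hn) (hh h0 hn)]
    ring

lemma Ffun_const_mul (n k : ℕ) (ρ c : ℝ) (g : ℝ → ℝ) :
    Ffun n k ρ (fun t => c * g t) = c * Ffun n k ρ g := by
  unfold Ffun
  split_ifs
  · rfl
  · rfl
  · have : ∀ t : ℝ, t ^ ((k : ℝ) * ρ - 1) * (1 - t) ^ (((n : ℝ) - (k : ℝ)) * ρ - 1) * (c * g t)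
        = c * (t ^ ((k : ℝ) * ρ - 1) * (1 - t) ^ (((n : ℝ) - (k : ℝ)) * ρ - 1) * g t) :=
      fun t => by ring
    simp only [this]
    rw [intervalIntegral.integral_const_mul]
    ring

lemma Ffun_const (n k : ℕ) (hk : k ≤ n) (ρ : ℝ) (hρ : 0 < ρ) (c : ℝ) :
    Ffun n k ρ (fun _ => c) = c := by
  unfold Ffun
  split_ifs with h0 hn
  · rfl
  · rfl
  · have hk1 : 1 ≤ k := Nat.one_le_iff_ne_zero.2 h0
    have hkn : k < n := lt_of_le_of_ne hk hn
    have ha : 0 < (k : ℝ) * ρ := mul_pos (by exact_mod_cast hk1) hρ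
    have hb : 0 < ((n : ℝ) - (k : ℝ)) * ρ := by
      apply mul_pos _ hρ
      have : (k : ℝ) < n := by exact_mod_cast hkn
      linarith
    rw [intervalIntegral.integral_mul_const]
    show (betaFn ((k : ℝ) * ρ) (((n : ℝ) - (k : ℝ)) * ρ))⁻¹ *
      (betaFn ((k : ℝ) * ρ) (((n : ℝ) - (k : ℝ)) * ρ) * c) = c
    rw [← mul_assoc, inv_mul_cancel₀ (ne_of_gt (betaFn_pos ha hb)), one_mul]

lemma Ffun_zero (n k : ℕ) (ρ : ℝ) : Ffun n k ρ (fun _ => 0) = 0 := by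
  unfold Ffun
  split_ifs <;> simp

lemma Ffun_sum (n k : ℕ) (ρ : ℝ) {ι : Type*} (I : Finset ι) (g : ι → ℝ → ℝ)
    (hint : ∀ i ∈ I, k ≠ 0 → k ≠ n → IntervalIntegrable
      (fun t : ℝ => t ^ ((k : ℝ) * ρ - 1) * (1 - t) ^ (((n : ℝ) - (k : ℝ)) * ρ - 1) * g i t)
      volume 0 1) :
    Ffun n k ρ (fun x => ∑ i ∈ I, g i x) = ∑ i ∈ I, Ffun n k ρ (g i) := by
  classical
  induction I using Finset.induction with
  | empty => simpa using Ffun_zero n k ρ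
  | @insert i I hi ih =>
    have hsum : k ≠ 0 → k ≠ n → IntervalIntegrable
        (fun t : ℝ => t ^ ((k : ℝ) * ρ - 1) * (1 - t) ^ (((n : ℝ) - (k : ℝ)) * ρ - 1)
          * ∑ j ∈ I, g j t) volume 0 1 := by
      intro h0 hn
      have h1 : (fun t : ℝ => t ^ ((k : ℝ) * ρ - 1) * (1 - t) ^ (((n : ℝ) - (k : ℝ)) * ρ - 1)
          * ∑ j ∈ I, g j t)
          = ∑ j ∈ I, fun t : ℝ => t ^ ((k : ℝ) * ρ - 1) * (1 - t) ^ (((n : ℝ) - (k : ℝ)) * ρ - 1)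
            * g j t := by
        funext t
        simp [Finset.mul_sum]
      rw [h1]
      exact IntervalIntegrable.sum I
        (fun j hj => hint j (Finset.mem_insert_of_mem hj) h0 hn)
    have h2 : (fun x => ∑ j ∈ insert i I, g j x) = fun x => g i x + ∑ j ∈ I, g j x := by
      funext x; rw [Finset.sum_insert hi]
    rw [h2, Ffun_add n k ρ _ _ (hint i (Finset.mem_insert_self i I)) hsum,
      Finset.sum_insert hi, ih (fun j hj => hint j (Finset.mem_insert_of_mem hj))]

lemma bern_sum (n : ℕ) (x : ℝ) : ∑ k ∈ Finset.range (n + 1), bern n k x = 1 := by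
  have h := add_pow x (1 - x) n
  have h2 : ∑ k ∈ Finset.range (n + 1), bern n k x
      = ∑ k ∈ Finset.range (n + 1), x ^ k * (1 - x) ^ (n - k) * (n.choose k : ℝ) :=
    Finset.sum_congr rfl fun k _ => by unfold bern; ring
  rw [h2, ← h]
  norm_num

lemma Uop_const (n : ℕ) (ρ : ℝ) (hρ : 0 < ρ) (c x : ℝ) :
    Uop n ρ (fun _ => c) x = c := by
  unfold Uop
  have h : ∀ k ∈ Finset.range (n + 1), Ffun n k ρ (fun _ => c) * bern n k x = c * bern n k x :=
    fun k hk => by rw [Ffun_const n k (Nat.lt_succ_iff.1 (Finset.mem_range.1 hk)) ρ hρ]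
  rw [Finset.sum_congr rfl h, ← Finset.mul_sum, bern_sum, mul_one]

lemma poly_rep (Q : ℕ → Polynomial ℝ) :
    ∀ m : ℕ, (∀ k ≤ m, Q k ≠ 0 ∧ (Q k).natDegree = k) →
    ∀ p : Polynomial ℝ, p.natDegree ≤ m →
    ∃ c : ℕ → ℝ, c m = p.coeff m / (Q m).leadingCoeff ∧
      p = ∑ k ∈ Finset.range (m + 1), Polynomial.C (c k) * Q k := by
  intro m
  induction m with
  | zero =>
    intro hQ p hp
    refine ⟨fun _ => p.coeff 0 / (Q 0).leadingCoeff, rfl, ?_⟩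
    obtain ⟨hQ0, hQd⟩ := hQ 0 le_rfl
    have hpc : p = Polynomial.C (p.coeff 0) := Polynomial.eq_C_of_natDegree_le_zero hp
    have hQc : Q 0 = Polynomial.C ((Q 0).coeff 0) := Polynomial.eq_C_of_natDegree_le_zero hQd.le
    have hb : (Q 0).coeff 0 ≠ 0 := by
      intro h
      apply hQ0
      rw [hQc, h, map_zero]
    rw [Finset.sum_range_one, hQc, Polynomial.leadingCoeff_C, ← Polynomial.C_mul,
      div_mul_cancel₀ _ hb]
    exact hpc
  | succ m ih =>
    intro hQ p hp
    obtain ⟨hQne, hQd⟩ := hQ (m + 1) le_rfl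
    have hlc : (Q (m + 1)).leadingCoeff ≠ 0 := Polynomial.leadingCoeff_ne_zero.2 hQne
    set α := p.coeff (m + 1) / (Q (m + 1)).leadingCoeff with hα
    have hd : (p - Polynomial.C α * Q (m + 1)).natDegree ≤ m := by
      rw [Polynomial.natDegree_le_iff_coeff_eq_zero]
      intro j hj
      rw [Polynomial.coeff_sub, Polynomial.coeff_C_mul]
      rcases eq_or_lt_of_le (Nat.succ_le_of_lt hj) with he | hlt
      · have hcc : (Q (m + 1)).coeff (m + 1) = (Q (m + 1)).leadingCoeff := by
          rw [Polynomial.leadingCoeff, hQd]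
        rw [← he, hcc, hα, div_mul_cancel₀ _ hlc, sub_self]
      · have h1 : p.coeff j = 0 := Polynomial.coeff_eq_zero_of_natDegree_lt (lt_of_le_of_lt hp hlt)
        have h2 : (Q (m + 1)).coeff j = 0 :=
          Polynomial.coeff_eq_zero_of_natDegree_lt (by rw [hQd]; exact hlt)
        rw [h1, h2, mul_zero, sub_self]
    obtain ⟨c, hc, hrep⟩ := ih (fun k hk => hQ k (le_trans hk (Nat.le_succ m))) _ hd
    refine ⟨fun k => if k = m + 1 then α else c k, by simp [hα], ?_⟩
    rw [Finset.sum_range_succ]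
    have hcongr : ∑ k ∈ Finset.range (m + 1), Polynomial.C (if k = m + 1 then α else c k) * Q k
        = ∑ k ∈ Finset.range (m + 1), Polynomial.C (c k) * Q k :=
      Finset.sum_congr rfl fun k hk => by
        rw [if_neg (by have := Finset.mem_range.1 hk; omega)]
    rw [hcongr, ← hrep]
    simp

lemma tendstoUniformlyOn_mul_of_bdd (a : ℕ → ℝ) (b : ℝ) (h : ℝ → ℝ) (s : Set ℝ)
    (C : ℝ) (hC : ∀ x ∈ s, |h x| ≤ C)
    (ha : Filter.Tendsto a Filter.atTop (nhds b)) :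
    TendstoUniformlyOn (fun M x => a M * h x) (fun x => b * h x) Filter.atTop s := by
  rw [Metric.tendstoUniformlyOn_iff]
  intro ε hε
  have hD : (0:ℝ) < |C| + 1 := by positivity
  have hδ : 0 < ε / (|C| + 1) := div_pos hε hD
  filter_upwards [Metric.tendsto_nhds.mp ha _ hδ] with M hM x hx
  have h1 : dist (b * h x) (a M * h x) = |b - a M| * |h x| := by
    rw [Real.dist_eq, ← sub_mul, abs_mul]
  rw [h1]
  have h2 : |h x| ≤ |C| + 1 := le_trans (hC x hx) (by linarith [le_abs_self C])
  have h3 : |b - a M| < ε / (|C| + 1) := by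
    rw [Real.dist_eq] at hM
    rw [abs_sub_comm]
    exact hM
  calc |b - a M| * |h x| ≤ |b - a M| * (|C| + 1) :=
        mul_le_mul_of_nonneg_left h2 (abs_nonneg _)
    _ < ε := by
        rw [← lt_div_iff₀ hD]
        exact h3

lemma tendstoUniformlyOn_sum {ι : Type*} (I : Finset ι) (a : ι → ℕ → ℝ) (b : ι → ℝ)
    (h : ι → ℝ → ℝ) (s : Set ℝ)
    (hb : ∀ i ∈ I, ∃ C, ∀ x ∈ s, |h i x| ≤ C)
    (ha : ∀ i ∈ I, Filter.Tendsto (a i) Filter.atTop (nhds (b i))) :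
    TendstoUniformlyOn (fun M x => ∑ i ∈ I, a i M * h i x)
      (fun x => ∑ i ∈ I, b i * h i x) Filter.atTop s := by
  classical
  induction I using Finset.induction with
  | empty =>
    simp only [Finset.sum_empty]
    rw [Metric.tendstoUniformlyOn_iff]
    intro ε hε
    filter_upwards with M x hx
    simpa using hε
  | @insert i I hi ih =>
    simp only [Finset.sum_insert hi]
    exact (tendstoUniformlyOn_mul_of_bdd (a i) (b i) (h i) s _
      (hb i (Finset.mem_insert_self i I)).choose_spec
      (ha i (Finset.mem_insert_self i I))).add
      (ih (fun j hj => hb j (Finset.mem_insert_of_mem hj))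
        (fun j hj => ha j (Finset.mem_insert_of_mem hj)))

/-- Let `n ≥ 2`, `ρ > 0`, and suppose `U_n^ρ` has eigenpolynomials `q_k` of exact
degree `k` with eigenvalues `1 = λ₀ = λ₁ > λ₂ > … > λ_n > 0`, where `q_n` is monic.
Then for every continuous `f`,
`(1−λ_n)^{−M}(⊕^M U_n^ρ f − L_n^ρ f) → −[F_{n,0}^ρ,…,F_{n,n}^ρ; f] · q_n`
uniformly on `[0,1]` as `M → ∞`. -/
theorem boolSum_asymptotics (n : ℕ) (hn : 2 ≤ n) (ρ : ℝ) (hρ : 0 < ρ)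
    (q : Fin (n + 1) → Polynomial ℝ) (lam : Fin (n + 1) → ℝ)
    (hdeg : ∀ k, (q k).natDegree = (k : ℕ))
    (heig : ∀ k, ∀ x : ℝ, Uop n ρ (fun t => (q k).eval t) x = lam k * (q k).eval x)
    (hmonic : (q (Fin.last n)).Monic)
    (hlam0 : lam 0 = 1) (hlam1 : lam 1 = 1)
    (hlamdec : ∀ j k : Fin (n + 1), 1 ≤ (j : ℕ) → j < k → lam k < lam j)
    (hlampos : 0 < lam (Fin.last n))
    (f : ℝ → ℝ) (hf : ContinuousOn f (Set.Icc 0 1))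
    (L : Polynomial ℝ) (hLdeg : L.natDegree ≤ n)
    (hL : ∀ k ≤ n, Ffun n k ρ (fun x => L.eval x) = Ffun n k ρ f) :
    TendstoUniformlyOn
      (fun (M : ℕ) (x : ℝ) =>
        ((1 - lam (Fin.last n)) ^ M)⁻¹ * (boolSum n ρ M f x - L.eval x))
      (fun x => -(L.coeff n) * (q (Fin.last n)).eval x)
      Filter.atTop (Set.Icc 0 1) := by
  classical
  have hone : ((1 : Fin (n + 1)) : ℕ) = 1 := by
    rw [Fin.val_one', Nat.mod_eq_of_lt (by omega)]
  have h1lt : (1 : Fin (n + 1)) < Fin.last n := by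
    rw [Fin.lt_def, hone, Fin.val_last]; omega
  have hlamlt1 : lam (Fin.last n) < 1 := by
    have := hlamdec 1 (Fin.last n) (by rw [hone]) h1lt
    rwa [hlam1] at this
  have hgap : 0 < 1 - lam (Fin.last n) := by linarith
  -- the modified eigen family
  set Q : ℕ → Polynomial ℝ := fun k =>
    if hk : k < n + 1 then (if k = 0 then 1 else q ⟨k, hk⟩) else 0 with hQdef
  set μ : ℕ → ℝ := fun k =>
    if hk : k < n + 1 then (if k = 0 then 1 else lam ⟨k, hk⟩) else 0 with hμdef
  have hQ0 : Q 0 = 1 := by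
    simp only [hQdef]
    rw [dif_pos (by omega : (0:ℕ) < n + 1)]
    simp
  have hQk : ∀ k, 1 ≤ k → ∀ hk : k < n + 1, Q k = q ⟨k, hk⟩ := by
    intro k hk1 hk
    simp only [hQdef]
    rw [dif_pos hk, if_neg (by omega)]
  have hμ0 : μ 0 = 1 := by
    simp only [hμdef]
    rw [dif_pos (by omega : (0:ℕ) < n + 1)]
    simp
  have hμk : ∀ k, 1 ≤ k → ∀ hk : k < n + 1, μ k = lam ⟨k, hk⟩ := by
    intro k hk1 hk
    simp only [hμdef]
    rw [dif_pos hk, if_neg (by omega)]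
  have hμn : μ n = lam (Fin.last n) := by
    rw [hμk n (by omega) (by omega)]
    exact congrArg lam (Fin.ext rfl)
  have hμ1 : μ 1 = 1 := by
    rw [hμk 1 le_rfl (by omega)]
    have he : (⟨1, by omega⟩ : Fin (n + 1)) = 1 := Fin.ext (by rw [hone])
    rw [he, hlam1]
  have hμle : ∀ k ≤ n, μ k ≤ 1 := by
    intro k hk
    rcases Nat.lt_or_ge k 2 with h2 | h2
    · interval_cases k
      · rw [hμ0]
      · rw [hμ1]
    · rw [hμk k (by omega) (by omega)]
      have := hlamdec 1 ⟨k, by omega⟩ (by rw [hone]) (by rw [Fin.lt_def, hone]; exact h2)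
      rw [hlam1] at this
      linarith
  have hμgt : ∀ k < n, lam (Fin.last n) < μ k := by
    intro k hk
    rcases Nat.lt_or_ge k 2 with h2 | h2
    · interval_cases k
      · rw [hμ0]; exact hlamlt1
      · rw [hμ1]; exact hlamlt1
    · rw [hμk k (by omega) (by omega)]
      exact hlamdec ⟨k, by omega⟩ (Fin.last n) (by simpa using (by omega : 1 ≤ k))
        (by rw [Fin.lt_def, Fin.val_last]; exact hk)
  have heig' : ∀ k ≤ n, ∀ x : ℝ, Uop n ρ (fun t => (Q k).eval t) x = μ k * (Q k).eval x := by
    intro k hk x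
    by_cases hk0 : k = 0
    · subst hk0
      rw [hQ0, hμ0]
      have he : (fun t : ℝ => (1 : Polynomial ℝ).eval t) = fun _ : ℝ => (1:ℝ) := by
        funext t; simp
      rw [he, Uop_const n ρ hρ 1 x]
      simp
    · rw [hQk k (by omega) (by omega), hμk k (by omega) (by omega)]
      exact heig ⟨k, by omega⟩ x
  have hQprop : ∀ k ≤ n, Q k ≠ 0 ∧ (Q k).natDegree = k := by
    intro k hk
    by_cases hk0 : k = 0
    · subst hk0
      rw [hQ0]
      exact ⟨one_ne_zero, Polynomial.natDegree_one⟩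
    · rw [hQk k (by omega) (by omega)]
      have hd : (q ⟨k, by omega⟩).natDegree = k := hdeg ⟨k, by omega⟩
      constructor
      · intro h0
        rw [h0, Polynomial.natDegree_zero] at hd
        exact hk0 hd.symm
      · exact hd
  obtain ⟨c, hcn, hLrep⟩ := poly_rep Q n hQprop L hLdeg
  have hQn : Q n = q (Fin.last n) := by
    rw [hQk n (by omega) (by omega)]
    exact congrArg q (Fin.ext rfl)
  have hcn' : c n = L.coeff n := by
    rw [hcn, hQn, hmonic.leadingCoeff, div_one]
  have hLeval : ∀ x : ℝ, L.eval x = ∑ k ∈ Finset.range (n + 1), c k * (Q k).eval x := by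
    intro x
    conv_lhs => rw [hLrep]
    rw [Polynomial.eval_finset_sum]
    exact Finset.sum_congr rfl fun k _ => by simp
  -- U applied to eigen-sums
  have hUopS : ∀ (a : ℕ → ℝ) (x : ℝ),
      Uop n ρ (fun y => ∑ k ∈ Finset.range (n + 1), a k * (Q k).eval y) x
        = ∑ k ∈ Finset.range (n + 1), a k * (μ k * (Q k).eval x) := by
    intro a x
    have hFj : ∀ j ∈ Finset.range (n + 1),
        Ffun n j ρ (fun y => ∑ k ∈ Finset.range (n + 1), a k * (Q k).eval y)
          = ∑ k ∈ Finset.range (n + 1), a k * Ffun n j ρ (fun y => (Q k).eval y) := by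
      intro j hj
      have hjn : j ≤ n := Nat.lt_succ_iff.1 (Finset.mem_range.1 hj)
      rw [Ffun_sum n j ρ (Finset.range (n + 1)) (fun k y => a k * (Q k).eval y)
        (fun i _ h0 hn' => kInt_of_continuousOn hρ (Nat.one_le_iff_ne_zero.2 h0)
          (lt_of_le_of_ne hjn hn')
          ((continuous_const.mul (Q i).continuous).continuousOn))]
      exact Finset.sum_congr rfl fun k _ => Ffun_const_mul n j ρ (a k) _
    unfold Uop
    rw [Finset.sum_congr rfl (fun j hj => by rw [hFj j hj])]
    rw [Finset.sum_congr rfl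
      (fun j (_ : j ∈ Finset.range (n + 1)) => Finset.sum_mul (Finset.range (n + 1))
        (fun k => a k * Ffun n j ρ (fun y => (Q k).eval y)) (bern n j x))]
    rw [Finset.sum_comm]
    refine Finset.sum_congr rfl fun k hk => ?_
    have hk' : k ≤ n := Nat.lt_succ_iff.1 (Finset.mem_range.1 hk)
    have hterm : ∀ j ∈ Finset.range (n + 1),
        a k * Ffun n j ρ (fun y => (Q k).eval y) * bern n j x
          = a k * (Ffun n j ρ (fun y => (Q k).eval y) * bern n j x) :=
      fun j _ => by ring
    rw [Finset.sum_congr rfl hterm, ← Finset.mul_sum]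
    have hUk : ∑ j ∈ Finset.range (n + 1), Ffun n j ρ (fun y => (Q k).eval y) * bern n j x
        = Uop n ρ (fun y => (Q k).eval y) x := rfl
    rw [hUk, heig' k hk' x]
  -- Ffun kills f - L
  have hFfix : ∀ j ≤ n, ∀ S : ℝ → ℝ, Continuous S →
      Ffun n j ρ (fun y => f y - L.eval y + S y) = Ffun n j ρ S := by
    intro j hj S hS
    have hintL : j ≠ 0 → j ≠ n → IntervalIntegrable
        (fun t : ℝ => t ^ ((j : ℝ) * ρ - 1) * (1 - t) ^ (((n : ℝ) - (j : ℝ)) * ρ - 1)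
          * (f t - L.eval t)) volume 0 1 := by
      intro h0 hn'
      have h1 : 1 ≤ j := Nat.one_le_iff_ne_zero.2 h0
      have h2 : j < n := lt_of_le_of_ne hj hn'
      have := (kInt_of_continuousOn hρ h1 h2 hf).sub
        (kInt_of_continuousOn hρ h1 h2 (L.continuous).continuousOn)
      simpa [mul_sub] using this
    have hsplit : Ffun n j ρ (fun y => (f y - L.eval y) + S y)
        = Ffun n j ρ (fun y => f y - L.eval y) + Ffun n j ρ S :=
      Ffun_add n j ρ _ _ hintL
        (fun h0 hn' => kInt_of_continuousOn hρ (Nat.one_le_iff_ne_zero.2 h0)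
          (lt_of_le_of_ne hj hn') hS.continuousOn)
    rw [hsplit]
    have hzero : Ffun n j ρ (fun y => f y - L.eval y) = 0 := by
      have hsub : Ffun n j ρ (fun y => f y - L.eval y)
          = Ffun n j ρ f - Ffun n j ρ (fun y => L.eval y) :=
        Ffun_sub n j ρ _ _
          (fun h0 hn' => kInt_of_continuousOn hρ (Nat.one_le_iff_ne_zero.2 h0)
            (lt_of_le_of_ne hj hn') hf)
          (fun h0 hn' => kInt_of_continuousOn hρ (Nat.one_le_iff_ne_zero.2 h0)
            (lt_of_le_of_ne hj hn') (L.continuous).continuousOn)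
      rw [hsub, hL j hj, sub_self]
    rw [hzero, zero_add]
  -- main iteration formula
  have key : ∀ M : ℕ, (fun (g : ℝ → ℝ) (y : ℝ) => g y - Uop n ρ g y)^[M] f
      = fun x => f x - L.eval x
        + ∑ k ∈ Finset.range (n + 1), c k * (1 - μ k) ^ M * (Q k).eval x := by
    intro M
    induction M with
    | zero =>
      funext x
      rw [Function.iterate_zero_apply]
      simp only [pow_zero, mul_one]
      rw [hLeval x]
      ring
    | succ M ih =>
      rw [Function.iterate_succ_apply', ih]
      funext x
      simp only []
      have hScont : Continuous
          (fun y : ℝ => ∑ k ∈ Finset.range (n + 1), c k * (1 - μ k) ^ M * (Q k).eval y) :=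
        continuous_finset_sum _ fun k _ => continuous_const.mul (Q k).continuous
      have hU : Uop n ρ (fun y => f y - L.eval y
          + ∑ k ∈ Finset.range (n + 1), c k * (1 - μ k) ^ M * (Q k).eval y) x
          = ∑ k ∈ Finset.range (n + 1), (c k * (1 - μ k) ^ M) * (μ k * (Q k).eval x) := by
        have he1 : Uop n ρ (fun y => f y - L.eval y
            + ∑ k ∈ Finset.range (n + 1), c k * (1 - μ k) ^ M * (Q k).eval y) x
            = Uop n ρ (fun y => ∑ k ∈ Finset.range (n + 1),
                (c k * (1 - μ k) ^ M) * (Q k).eval y) x := by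
          unfold Uop
          exact Finset.sum_congr rfl fun j hj => by
            rw [hFfix j (Nat.lt_succ_iff.1 (Finset.mem_range.1 hj)) _ hScont]
        rw [he1]
        exact hUopS (fun k => c k * (1 - μ k) ^ M) x
      rw [hU]
      have hAB : (∑ k ∈ Finset.range (n + 1), c k * (1 - μ k) ^ M * (Q k).eval x)
          - ∑ k ∈ Finset.range (n + 1), (c k * (1 - μ k) ^ M) * (μ k * (Q k).eval x)
          = ∑ k ∈ Finset.range (n + 1), c k * (1 - μ k) ^ (M + 1) * (Q k).eval x := by
        rw [← Finset.sum_sub_distrib]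
        exact Finset.sum_congr rfl fun k _ => by ring
      linarith [hAB]
  -- rewrite the approximants
  have hGeq : (fun (M : ℕ) (x : ℝ) =>
      ((1 - lam (Fin.last n)) ^ M)⁻¹ * (boolSum n ρ M f x - L.eval x))
      = fun M x => ∑ k ∈ Finset.range (n + 1),
          (-(c k * ((1 - μ k) / (1 - lam (Fin.last n))) ^ M)) * (Q k).eval x := by
    funext M x
    have hb : boolSum n ρ M f x - L.eval x
        = -∑ k ∈ Finset.range (n + 1), c k * (1 - μ k) ^ M * (Q k).eval x := by
      unfold boolSum
      rw [key M]
      simp only []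
      ring
    rw [hb, mul_neg, Finset.mul_sum, ← Finset.sum_neg_distrib]
    refine Finset.sum_congr rfl fun k _ => ?_
    rw [div_pow]
    have hpne : ((1 : ℝ) - lam (Fin.last n)) ^ M ≠ 0 := pow_ne_zero M (ne_of_gt hgap)
    field_simp
  rw [hGeq]
  have htarget : (fun x : ℝ => -(L.coeff n) * (q (Fin.last n)).eval x)
      = fun x => ∑ k ∈ Finset.range (n + 1),
          (if k = n then -(L.coeff n) else 0) * (Q k).eval x := by
    funext x
    simp only [ite_mul, zero_mul]
    rw [Finset.sum_ite_eq' (Finset.range (n + 1)) n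
      (fun k => -(L.coeff n) * (Q k).eval x)]
    rw [if_pos (Finset.mem_range.2 (by omega)), hQn]
  rw [htarget]
  apply tendstoUniformlyOn_sum
  · intro k _
    obtain ⟨C, hC⟩ := isCompact_Icc.exists_bound_of_continuousOn
      ((Q k).continuous).continuousOn
    exact ⟨C, fun x hx => by simpa [Real.norm_eq_abs] using hC x hx⟩
  · intro k hk
    by_cases hkn : k = n
    · have hr1 : (1 - μ k) / (1 - lam (Fin.last n)) = 1 := by
        rw [hkn, hμn]
        exact div_self (ne_of_gt hgap)
      have hfun : (fun M : ℕ => -(c k * ((1 - μ k) / (1 - lam (Fin.last n))) ^ M))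
          = fun _ : ℕ => -(L.coeff n) := by
        funext M
        rw [hr1, one_pow, mul_one, hkn, hcn']
      rw [hfun, if_pos hkn]
      exact tendsto_const_nhds
    · have hklt : k < n := by
        have := Finset.mem_range.1 hk; omega
      have hkle : k ≤ n := le_of_lt hklt
      have hr0 : 0 ≤ (1 - μ k) / (1 - lam (Fin.last n)) :=
        div_nonneg (by linarith [hμle k hkle]) (le_of_lt hgap)
      have hr1 : (1 - μ k) / (1 - lam (Fin.last n)) < 1 := by
        rw [div_lt_one hgap]
        linarith [hμgt k hklt]
      have ht : Filter.Tendsto (fun M : ℕ => ((1 - μ k) / (1 - lam (Fin.last n))) ^ M)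
          Filter.atTop (nhds 0) := tendsto_pow_atTop_nhds_zero_of_lt_one hr0 hr1
      have h2 := (ht.const_mul (c k)).neg
      simp only [mul_zero, neg_zero] at h2
      rw [if_neg hkn]
      exact h2
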